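/- Let (X,f) be a TDS and φ, ψ ∈ C(X,ℝ) with ψ > 0. Then P_ψ(φ) ≥ inf{ β ∈ ℝ : P(φ − βψ) ≤ 0 }, where P is the classical topological pressure. -/

import Mathlib

open MeasureTheory Filter Topology Set

variable {X : Type*}

/-- Birkhoff sum `S_n φ (x) = ∑_{i<n} φ(f^i x)`. -/
noncomputable def birkhoff (f : X → X) (φ : X → ℝ) (n : ℕ) (x : X) : ℝ :=
  ∑ i ∈ Finset.range n, φ (f^[i] x)

/-- The `n`-th Bowen metric. -/
noncomputable def dynDist [MetricSpace X] (f : X → X) (n : ℕ) (x y : X) : ℝ :=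
  ⨆ i : Fin n, dist (f^[(i : ℕ)] x) (f^[(i : ℕ)] y)

/-- `F` is an `(n,ε)`-spanning set of `Z`. -/
def IsSpanningSet [MetricSpace X] (f : X → X) (n : ℕ) (ε : ℝ) (Z : Set X) (F : Finset X) : Prop :=
  ∀ y ∈ Z, ∃ x ∈ F, dynDist f n x y ≤ ε

/-- `E` is `(n,ε)`-separated. -/
def IsSeparatedSet [MetricSpace X] (f : X → X) (n : ℕ) (ε : ℝ) (E : Finset X) : Prop :=
  ∀ x ∈ E, ∀ y ∈ E, x ≠ y → ε < dynDist f n x y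

/-- `S_T = {n : ∃ x, S_n ψ(x) ≤ T < S_{n+1} ψ(x)}`. -/
def STset (f : X → X) (ψ : X → ℝ) (T : ℝ) : Set ℕ :=
  {n | ∃ x : X, birkhoff f ψ n x ≤ T ∧ T < birkhoff f ψ (n + 1) x}

/-- `X_n = {x : S_n ψ(x) ≤ T < S_{n+1} ψ(x)}`. -/
def Xset (f : X → X) (ψ : X → ℝ) (T : ℝ) (n : ℕ) : Set X :=
  {x | birkhoff f ψ n x ≤ T ∧ T < birkhoff f ψ (n + 1) x}

/-- `Q_{ψ,T}(f,φ,ε)`, the spanning-set quantity. -/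
noncomputable def Qspan [MetricSpace X] (f : X → X) (φ ψ : X → ℝ) (T ε : ℝ) : ℝ :=
  sInf { r : ℝ | ∃ F : ℕ → Finset X,
    (∀ n ∈ STset f ψ T, IsSpanningSet f n ε (Xset f ψ T n) (F n)) ∧
    r = ∑' n : ℕ, Set.indicator (STset f ψ T)
        (fun n => ∑ x ∈ F n, Real.exp (birkhoff f φ n x)) n }

/-- `P_{ψ,T}(f,φ,ε)`, the separated-set quantity. -/
noncomputable def Psep [MetricSpace X] (f : X → X) (φ ψ : X → ℝ) (T ε : ℝ) : ℝ :=
  sSup { r : ℝ | ∃ E : ℕ → Finset X,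
    (∀ n ∈ STset f ψ T, (E n : Set X) ⊆ Xset f ψ T n ∧ IsSeparatedSet f n ε (E n)) ∧
    r = ∑' n : ℕ, Set.indicator (STset f ψ T)
        (fun n => ∑ x ∈ E n, Real.exp (birkhoff f φ n x)) n }

/-- The `ψ`-induced topological pressure of `φ`. -/
noncomputable def inducedPressure [MetricSpace X] (f : X → X) (φ ψ : X → ℝ) : EReal :=
  ⨆ (ε : ℝ) (_ : 0 < ε),
    Filter.limsup (fun T : ℝ => ((T⁻¹ * Real.log (Qspan f φ ψ T ε) : ℝ) : EReal)) atTop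

/-- Largest sum over `(n,ε)`-separated sets of `X`. -/
noncomputable def sepSum [MetricSpace X] (f : X → X) (φ : X → ℝ) (n : ℕ) (ε : ℝ) : ℝ :=
  sSup { r : ℝ | ∃ E : Finset X, IsSeparatedSet f n ε E ∧
    r = ∑ x ∈ E, Real.exp (birkhoff f φ n x) }

/-- The classical (Walters) topological pressure. -/
noncomputable def topPressure [MetricSpace X] (f : X → X) (φ : X → ℝ) : EReal :=
  ⨆ (ε : ℝ) (_ : 0 < ε),
    Filter.limsup (fun n : ℕ => (((n : ℝ)⁻¹ * Real.log (sepSum f φ n ε) : ℝ) : EReal)) atTop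

set_option linter.unusedSectionVars false
set_option linter.unusedVariables false
set_option maxHeartbeats 1000000

section aux
variable {X : Type*} [MetricSpace X]

lemma dynDist_nonneg' (f : X → X) (n : ℕ) (x y : X) : 0 ≤ dynDist f n x y :=
  Real.iSup_nonneg fun _ => dist_nonneg

lemma dist_le_dynDist (f : X → X) {n i : ℕ} (hi : i < n) (x y : X) :
    dist (f^[i] x) (f^[i] y) ≤ dynDist f n x y := by
  unfold dynDist
  exact le_ciSup (f := fun j : Fin n => dist (f^[(j:ℕ)] x) (f^[(j:ℕ)] y))
    (Set.Finite.bddAbove (Set.finite_range _)) (⟨i, hi⟩ : Fin n)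

lemma dynDist_le' (f : X → X) {n : ℕ} {x y : X} {a : ℝ} (ha : 0 ≤ a)
    (h : ∀ i < n, dist (f^[i] x) (f^[i] y) ≤ a) : dynDist f n x y ≤ a := by
  unfold dynDist
  exact Real.iSup_le (fun i => h i i.2) ha

lemma dynDist_comm' (f : X → X) (n : ℕ) (x y : X) : dynDist f n x y = dynDist f n y x := by
  unfold dynDist; simp_rw [dist_comm]

lemma dynDist_triangle (f : X → X) (n : ℕ) (x y z : X) :
    dynDist f n x z ≤ dynDist f n x y + dynDist f n y z := by
  apply dynDist_le' f (add_nonneg (dynDist_nonneg' f n x y) (dynDist_nonneg' f n y z))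
  intro i hi
  exact (dist_triangle _ _ _).trans
    (add_le_add (dist_le_dynDist f hi x y) (dist_le_dynDist f hi y z))

lemma exists_spanning [CompactSpace X] (f : X → X) (hf : Continuous f) (n : ℕ) {ε : ℝ}
    (hε : 0 < ε) : ∃ F : Finset X, ∀ Z : Set X, IsSpanningSet f n ε Z F := by
  have hopen : ∀ x : X, IsOpen (⋂ i : Fin n, {y | dist (f^[(i:ℕ)] x) (f^[(i:ℕ)] y) < ε}) := by
    intro x
    apply isOpen_iInter_of_finite
    intro i
    exact isOpen_lt (continuous_const.dist (hf.iterate _)) continuous_const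
  have hcov : (Set.univ : Set X) ⊆
      ⋃ x : X, ⋂ i : Fin n, {y | dist (f^[(i:ℕ)] x) (f^[(i:ℕ)] y) < ε} := by
    intro x _
    exact mem_iUnion.2 ⟨x, mem_iInter.2 fun i => by simpa using hε⟩
  obtain ⟨t, ht⟩ := isCompact_univ.elim_finite_subcover _ hopen hcov
  refine ⟨t, fun Z y _ => ?_⟩
  obtain ⟨x, hx, hmem⟩ := mem_iUnion₂.mp (ht (mem_univ y))
  exact ⟨x, hx, dynDist_le' f hε.le fun i hi => (mem_iInter.mp hmem ⟨i, hi⟩).le⟩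

end aux


section aux2
variable {X : Type*} [MetricSpace X]

lemma birkhoff_ge (f : X → X) (ψ : X → ℝ) {c : ℝ} (hc : ∀ x, c ≤ ψ x) (n : ℕ) (x : X) :
    (n : ℝ) * c ≤ birkhoff f ψ n x := by
  unfold birkhoff
  calc (n : ℝ) * c = ∑ _i ∈ Finset.range n, c := by
        simp [Finset.sum_const, mul_comm]
    _ ≤ _ := Finset.sum_le_sum fun i _ => hc _

lemma birkhoff_le (f : X → X) (ψ : X → ℝ) {C : ℝ} (hC : ∀ x, ψ x ≤ C) (n : ℕ) (x : X) :
    birkhoff f ψ n x ≤ (n : ℝ) * C := by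
  unfold birkhoff
  calc ∑ i ∈ Finset.range n, ψ (f^[i] x) ≤ ∑ _i ∈ Finset.range n, C :=
        Finset.sum_le_sum fun i _ => hC _
    _ = (n : ℝ) * C := by simp [Finset.sum_const, mul_comm]

lemma birkhoff_succ (f : X → X) (ψ : X → ℝ) (n : ℕ) (x : X) :
    birkhoff f ψ (n + 1) x = birkhoff f ψ n x + ψ (f^[n] x) := by
  unfold birkhoff
  exact Finset.sum_range_succ _ _

lemma birkhoff_sub (f : X → X) (φ ψ : X → ℝ) (β : ℝ) (n : ℕ) (x : X) :
    birkhoff f (fun y => φ y - β * ψ y) n x = birkhoff f φ n x - β * birkhoff f ψ n x := by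
  unfold birkhoff
  rw [Finset.mul_sum, ← Finset.sum_sub_distrib]

lemma birkhoff_diff_le (f : X → X) (φ : X → ℝ) {n : ℕ} {x y : X} {δ ε0 : ℝ}
    (hδ : 0 ≤ δ) (hmod : ∀ a b : X, dist a b < ε0 → |φ a - φ b| < δ)
    (hd : dynDist f n y x < ε0) : birkhoff f φ n x ≤ birkhoff f φ n y + (n : ℝ) * δ := by
  have h : ∀ i ∈ Finset.range n, φ (f^[i] x) ≤ φ (f^[i] y) + δ := by
    intro i hi
    have hi' := Finset.mem_range.mp hi
    have hdist : dist (f^[i] x) (f^[i] y) < ε0 := by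
      rw [dist_comm]
      exact lt_of_le_of_lt (dist_le_dynDist f hi' y x) hd
    have := hmod _ _ hdist
    have := (abs_lt.mp this).2
    linarith
  calc birkhoff f φ n x ≤ ∑ i ∈ Finset.range n, (φ (f^[i] y) + δ) := Finset.sum_le_sum h
    _ = birkhoff f φ n y + (n : ℝ) * δ := by
        rw [Finset.sum_add_distrib]
        unfold birkhoff
        simp [Finset.sum_const, mul_comm]

lemma STset_mem_le (f : X → X) (ψ : X → ℝ) {c : ℝ} (hc0 : 0 < c) (hc : ∀ x, c ≤ ψ x)
    {T : ℝ} {n : ℕ} (hn : n ∈ STset f ψ T) : (n : ℝ) * c ≤ T := by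
  obtain ⟨x, hx1, _⟩ := hn
  exact le_trans (birkhoff_ge f ψ hc n x) hx1

lemma term_le_tsum (f : X → X) (ψ : X → ℝ) {c : ℝ} (hc0 : 0 < c) (hc : ∀ x, c ≤ ψ x)
    (T : ℝ) (g : ℕ → ℝ) (hg : ∀ n, 0 ≤ g n) (n : ℕ) :
    Set.indicator (STset f ψ T) g n ≤ ∑' m, Set.indicator (STset f ψ T) g m := by
  have hsupp : ∀ m ∉ Finset.range (⌊T / c⌋₊ + 1), Set.indicator (STset f ψ T) g m = 0 := by
    intro m hm
    apply Set.indicator_of_notMem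
    intro hmem
    have h1 : (m : ℝ) * c ≤ T := STset_mem_le f ψ hc0 hc hmem
    have hT : 0 ≤ T := le_trans (by positivity) h1
    have h2 : (m : ℝ) ≤ T / c := (le_div_iff₀ hc0).mpr h1
    have h3 : ⌊T / c⌋₊ < m := by
      simpa [Finset.mem_range, Nat.lt_succ_iff, not_le] using hm
    have := (Nat.floor_lt (by positivity)).mp h3
    linarith
  exact Summable.le_tsum (summable_of_ne_finset_zero hsupp) n
    (fun j _ => Set.indicator_nonneg (fun m _ => hg m) j)

lemma tsum_ind_nonneg (f : X → X) (ψ : X → ℝ) (T : ℝ) (g : ℕ → ℝ) (hg : ∀ n, 0 ≤ g n) :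
    0 ≤ ∑' m, Set.indicator (STset f ψ T) g m :=
  tsum_nonneg fun m => Set.indicator_nonneg (fun k _ => hg k) m

lemma Qspan_nonneg (f : X → X) (φ ψ : X → ℝ) (T ε : ℝ) : 0 ≤ Qspan f φ ψ T ε := by
  apply Real.sInf_nonneg
  rintro r ⟨F, _, rfl⟩
  exact tsum_ind_nonneg f ψ T _ fun n =>
    Finset.sum_nonneg fun x _ => (Real.exp_pos _).le

lemma Qspan_lt [CompactSpace X] (f : X → X) (φ ψ : X → ℝ) (hf : Continuous f)
    (T : ℝ) {ε : ℝ} (hε : 0 < ε) {a : ℝ} (ha : Qspan f φ ψ T ε < a) :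
    ∃ F : ℕ → Finset X, (∀ n ∈ STset f ψ T, IsSpanningSet f n ε (Xset f ψ T n) (F n)) ∧
      (∑' n : ℕ, Set.indicator (STset f ψ T)
        (fun n => ∑ x ∈ F n, Real.exp (birkhoff f φ n x)) n) < a := by
  classical
  set S := { r : ℝ | ∃ F : ℕ → Finset X,
    (∀ n ∈ STset f ψ T, IsSpanningSet f n ε (Xset f ψ T n) (F n)) ∧
    r = ∑' n : ℕ, Set.indicator (STset f ψ T)
        (fun n => ∑ x ∈ F n, Real.exp (birkhoff f φ n x)) n } with hS
  have hne : S.Nonempty := by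
    refine ⟨_, fun n => (exists_spanning f hf n hε).choose, fun n _ =>
      (exists_spanning f hf n hε).choose_spec _, rfl⟩
  have hbdd : BddBelow S := by
    refine ⟨0, ?_⟩
    rintro r ⟨F, _, rfl⟩
    exact tsum_ind_nonneg f ψ T _ fun n => Finset.sum_nonneg fun x _ => (Real.exp_pos _).le
  obtain ⟨r, ⟨F, hF, rfl⟩, hr⟩ := (csInf_lt_iff hbdd hne).mp ha
  exact ⟨F, hF, hr⟩

end aux2


section aux3
variable {X : Type*} [MetricSpace X]

lemma exists_inj_map (f : X → X) {n : ℕ} {ε : ℝ} {E F : Finset X} {Z : Set X}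
    (hE : IsSeparatedSet f n ε E) (hEZ : (E : Set X) ⊆ Z)
    (hF : IsSpanningSet f n (ε / 2) Z F) :
    ∃ j : X → X, (∀ x ∈ E, j x ∈ F ∧ dynDist f n (j x) x ≤ ε / 2) ∧
      Set.InjOn j (E : Set X) := by
  classical
  have h : ∀ x ∈ E, ∃ y, y ∈ F ∧ dynDist f n y x ≤ ε / 2 := fun x hx => hF x (hEZ hx)
  choose! j hj1 hj2 using h
  refine ⟨j, fun x hx => ⟨hj1 x hx, hj2 x hx⟩, ?_⟩
  intro x hx x' hx' heq
  by_contra hne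
  have hsep := hE x hx x' hx' hne
  have : dynDist f n x x' ≤ ε := by
    calc dynDist f n x x' ≤ dynDist f n x (j x) + dynDist f n (j x) x' :=
          dynDist_triangle f n x (j x) x'
      _ = dynDist f n (j x) x + dynDist f n (j x') x' := by rw [dynDist_comm', heq]
      _ ≤ ε / 2 + ε / 2 := add_le_add (hj2 x hx) (hj2 x' hx')
      _ = ε := by ring
  exact absurd hsep (not_lt.mpr this)

lemma sum_le_of_inj (E F : Finset X) (j : X → X) (hjF : ∀ x ∈ E, j x ∈ F)
    (hinj : Set.InjOn j (E : Set X)) (u v : X → ℝ) (hv : ∀ y, 0 ≤ v y)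
    (huv : ∀ x ∈ E, u x ≤ v (j x)) : ∑ x ∈ E, u x ≤ ∑ y ∈ F, v y := by
  classical
  calc ∑ x ∈ E, u x ≤ ∑ x ∈ E, v (j x) := Finset.sum_le_sum huv
    _ = ∑ y ∈ E.image j, v y :=
        (Finset.sum_image fun x hx y hy h => hinj (Finset.mem_coe.mpr hx) (Finset.mem_coe.mpr hy) h).symm
    _ ≤ ∑ y ∈ F, v y :=
        Finset.sum_le_sum_of_subset_of_nonneg (Finset.image_subset_iff.mpr hjF)
          (fun y _ _ => hv y)

lemma sepSum_bddAbove [CompactSpace X] (f : X → X) (g : X → ℝ) (hf : Continuous f)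
    (hg : Continuous g) (n : ℕ) {ε : ℝ} (hε : 0 < ε) :
    BddAbove { r : ℝ | ∃ E : Finset X, IsSeparatedSet f n ε E ∧
      r = ∑ x ∈ E, Real.exp (birkhoff f g n x) } := by
  classical
  obtain ⟨F, hF⟩ := exists_spanning f hf n (by positivity : (0:ℝ) < ε / 2)
  by_cases hX : Nonempty X
  · have hbk : Continuous fun x => birkhoff f g n x := by
      unfold birkhoff
      exact continuous_finset_sum _ fun i _ => hg.comp (hf.iterate i)
    obtain ⟨z, _, hz'⟩ := isCompact_univ.exists_isMaxOn univ_nonempty hbk.continuousOn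
    have hz : ∀ x, birkhoff f g n x ≤ birkhoff f g n z := fun x => hz' (mem_univ x)
    refine ⟨(F.card : ℝ) * Real.exp (birkhoff f g n z), ?_⟩
    rintro r ⟨E, hE, rfl⟩
    obtain ⟨j, hj, hinj⟩ := exists_inj_map f hE (Set.subset_univ _) (hF Set.univ)
    calc ∑ x ∈ E, Real.exp (birkhoff f g n x)
        ≤ ∑ _x ∈ E, Real.exp (birkhoff f g n z) :=
          Finset.sum_le_sum fun x _ => Real.exp_le_exp.mpr (hz x)
      _ = (E.card : ℝ) * Real.exp (birkhoff f g n z) := by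
          simp [Finset.sum_const, mul_comm]
      _ ≤ (F.card : ℝ) * Real.exp (birkhoff f g n z) := by
          have : E.card ≤ F.card :=
            Finset.card_le_card_of_injOn j (fun x hx => (hj x hx).1) hinj
          exact mul_le_mul_of_nonneg_right (by exact_mod_cast this) (Real.exp_pos _).le
  · refine ⟨0, ?_⟩
    rintro r ⟨E, _, rfl⟩
    have : E = ∅ := Finset.eq_empty_of_forall_notMem fun x _ => hX ⟨x⟩
    simp [this]

lemma sepSum_nonneg [CompactSpace X] (f : X → X) (g : X → ℝ) (hf : Continuous f)
    (hg : Continuous g) (n : ℕ) {ε : ℝ} (hε : 0 < ε) : 0 ≤ sepSum f g n ε := by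
  apply le_csSup (sepSum_bddAbove f g hf hg n hε)
  exact ⟨∅, fun x hx => absurd hx (Finset.notMem_empty x), by simp⟩

lemma sepSum_mono [CompactSpace X] (f : X → X) (g : X → ℝ) (hf : Continuous f)
    (hg : Continuous g) (n : ℕ) {ε ε₂ : ℝ} (hε₂ : 0 < ε₂) (h : ε₂ ≤ ε) :
    sepSum f g n ε ≤ sepSum f g n ε₂ := by
  apply csSup_le_csSup (sepSum_bddAbove f g hf hg n hε₂)
  · exact ⟨0, ∅, fun x hx => absurd hx (Finset.notMem_empty x), by simp⟩
  · rintro r ⟨E, hE, rfl⟩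
    exact ⟨E, fun x hx y hy hne => lt_of_le_of_lt h (hE x hx y hy hne), rfl⟩

end aux3


section aux4
variable {X : Type*} [MetricSpace X]

lemma sep_bound [CompactSpace X] [Nonempty X] (f : X → X) (φ ψ : X → ℝ)
    (hf : Continuous f) {c C : ℝ} (hc0 : 0 < c) (hc : ∀ x, c ≤ ψ x) (hC : ∀ x, ψ x ≤ C)
    (β β₁ δ ε₂ ε0 T₀ : ℝ) (hβ₁β : β₁ < β) (hδ : 0 < δ) (hε₂ : 0 < ε₂)
    (hmod : ∀ a b : X, dist a b < ε0 → |φ a - φ b| < δ) (hε₂ε0 : ε₂ / 2 < ε0)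
    (hQ : ∀ T : ℝ, T₀ ≤ T → Qspan f φ ψ T (ε₂ / 2) ≤ Real.exp (β₁ * T))
    (n : ℕ) (hn : T₀ ≤ (n : ℝ) * c) :
    sepSum f (fun x => φ x - β * ψ x) n ε₂ ≤
      (2 * Real.exp (|β| * C)) * ((n : ℝ) * C / c + 2) * Real.exp ((n : ℝ) * (δ + (β₁ - β) * c)) := by
  classical
  have hC0 : 0 < C := hc0.trans_le ((hc (Classical.arbitrary X)).trans (hC (Classical.arbitrary X)))
  have hfrac : (0:ℝ) ≤ (n : ℝ) * C / c := by positivity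
  apply Real.sSup_le _ (by positivity)
  rintro r ⟨E, hE, rfl⟩
  set kf : X → ℤ := fun x => ⌈birkhoff f ψ n x / c⌉ with hkf
  set K : Finset ℤ := Finset.Icc (n : ℤ) ⌈((n : ℝ) * C) / c⌉ with hK
  have hmaps : ∀ x ∈ E, kf x ∈ K := by
    intro x hx
    simp only [hK, Finset.mem_Icc]
    constructor
    · have h1 : (n : ℝ) ≤ birkhoff f ψ n x / c := (le_div_iff₀ hc0).mpr (birkhoff_ge f ψ hc n x)
      calc (n : ℤ) = ⌈(n : ℝ)⌉ := by simp
        _ ≤ kf x := Int.ceil_le_ceil h1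
    · apply Int.ceil_le_ceil
      gcongr
      exact birkhoff_le f ψ hC n x
  rw [← Finset.sum_fiberwise_of_maps_to hmaps
    (fun x => Real.exp (birkhoff f (fun y => φ y - β * ψ y) n x))]
  set B : ℝ := (2 * Real.exp (|β| * C)) * Real.exp ((n : ℝ) * (δ + (β₁ - β) * c)) with hB
  have hB0 : 0 ≤ B := by positivity
  have hperk : ∀ k ∈ K,
      ∑ x ∈ Finset.filter (fun i => kf i = k) E,
        Real.exp (birkhoff f (fun y => φ y - β * ψ y) n x) ≤ B := by
    intro k hk
    by_cases hne : (Finset.filter (fun i => kf i = k) E).Nonempty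
    · obtain ⟨xb, hxb⟩ := hne
      set T : ℝ := (k : ℝ) * c with hT
      have hXsub : ∀ x ∈ Finset.filter (fun i => kf i = k) E, x ∈ Xset f ψ T n := by
        intro x hx
        obtain ⟨hxE, hkx⟩ := Finset.mem_filter.mp hx
        constructor
        · have h1 : birkhoff f ψ n x / c ≤ (k : ℝ) := by
            rw [← hkx]; exact_mod_cast Int.le_ceil _
          exact (div_le_iff₀ hc0).mp h1
        · have h2 : (k : ℝ) < birkhoff f ψ n x / c + 1 := by
            rw [← hkx]; exact_mod_cast Int.ceil_lt_add_one _
          have h3 := mul_lt_mul_of_pos_right h2 hc0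
          rw [add_mul, one_mul, div_mul_cancel₀ _ (ne_of_gt hc0)] at h3
          rw [birkhoff_succ]
          have := hc (f^[n] x)
          simp only [hT]
          linarith
      have hTn : (n : ℝ) * c ≤ T := by
        have h1 : (n : ℤ) ≤ k := (Finset.mem_Icc.mp hk).1
        have h2 : (n : ℝ) ≤ (k : ℝ) := by exact_mod_cast h1
        exact mul_le_mul_of_nonneg_right h2 hc0.le
      have hTT₀ : T₀ ≤ T := le_trans hn hTn
      have hnST : n ∈ STset f ψ T := ⟨xb, hXsub xb hxb⟩
      have hQT := hQ T hTT₀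
      obtain ⟨F, hFspan, hFsum⟩ := Qspan_lt f φ ψ hf T (by positivity)
        (lt_add_of_pos_right (Qspan f φ ψ T (ε₂ / 2)) (Real.exp_pos (β₁ * T)))
      have hterm : ∑ y ∈ F n, Real.exp (birkhoff f φ n y) ≤ 2 * Real.exp (β₁ * T) := by
        have h := term_le_tsum f ψ hc0 hc T
          (fun m => ∑ x ∈ F m, Real.exp (birkhoff f φ m x))
          (fun m => Finset.sum_nonneg fun _ _ => (Real.exp_pos _).le) n
        rw [Set.indicator_of_mem hnST] at h
        linarith
      have hEksep : IsSeparatedSet f n ε₂ (Finset.filter (fun i => kf i = k) E) :=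
        fun x hx y hy hxy =>
          hE x (Finset.mem_of_mem_filter x hx) y (Finset.mem_of_mem_filter y hy) hxy
      have hEkXs : ((Finset.filter (fun i => kf i = k) E : Finset X) : Set X) ⊆ Xset f ψ T n :=
        fun x hx => hXsub x hx
      obtain ⟨j, hj, hinj⟩ := exists_inj_map f hEksep hEkXs (hFspan n hnST)
      have step := sum_le_of_inj (Finset.filter (fun i => kf i = k) E) (F n) j
        (fun x hx => (hj x hx).1) hinj
        (fun x => Real.exp (birkhoff f (fun y => φ y - β * ψ y) n x))
        (fun y => Real.exp (|β| * C + (n : ℝ) * δ - β * T) * Real.exp (birkhoff f φ n y))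
        (fun y => by positivity) ?_
      · refine le_trans step ?_
        calc ∑ y ∈ F n, Real.exp (|β| * C + (n : ℝ) * δ - β * T) * Real.exp (birkhoff f φ n y)
            = Real.exp (|β| * C + (n : ℝ) * δ - β * T) * ∑ y ∈ F n, Real.exp (birkhoff f φ n y) := by
              rw [Finset.mul_sum]
          _ ≤ Real.exp (|β| * C + (n : ℝ) * δ - β * T) * (2 * Real.exp (β₁ * T)) :=
              mul_le_mul_of_nonneg_left hterm (Real.exp_pos _).le
          _ = 2 * Real.exp (|β| * C + (n : ℝ) * δ - β * T + β₁ * T) := by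
              rw [mul_left_comm, ← Real.exp_add]
          _ ≤ 2 * Real.exp (|β| * C + (n : ℝ) * (δ + (β₁ - β) * c)) := by
              have h4 : (β₁ - β) * T ≤ (β₁ - β) * ((n : ℝ) * c) :=
                mul_le_mul_of_nonpos_left hTn (by linarith)
              have h5 : |β| * C + (n : ℝ) * δ - β * T + β₁ * T ≤
                  |β| * C + (n : ℝ) * (δ + (β₁ - β) * c) := by nlinarith [h4]
              exact mul_le_mul_of_nonneg_left (Real.exp_le_exp.mpr h5) (by norm_num)
          _ = B := by rw [hB, Real.exp_add]; ring
      · intro x hx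
        rw [← Real.exp_add]
        apply Real.exp_le_exp.mpr
        rw [birkhoff_sub]
        have h1 : birkhoff f φ n x ≤ birkhoff f φ n (j x) + (n : ℝ) * δ :=
          birkhoff_diff_le f φ hδ.le hmod (lt_of_le_of_lt (hj x hx).2 hε₂ε0)
        have h2 : birkhoff f ψ n x ≤ T := (hXsub x hx).1
        have h3 : T < birkhoff f ψ n x + C := by
          have h3' := (hXsub x hx).2
          rw [birkhoff_succ] at h3'
          have := hC (f^[n] x)
          linarith
        have h4 : β * (T - birkhoff f ψ n x) ≤ |β| * C := by
          have h5 : β * (T - birkhoff f ψ n x) ≤ |β| * (T - birkhoff f ψ n x) :=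
            mul_le_mul_of_nonneg_right (le_abs_self β) (by linarith)
          have h6 : |β| * (T - birkhoff f ψ n x) ≤ |β| * C :=
            mul_le_mul_of_nonneg_left (by linarith) (abs_nonneg β)
          linarith
        linarith
    · rw [Finset.not_nonempty_iff_eq_empty.mp hne]
      simpa using hB0
  have hcard : (K.card : ℝ) ≤ (n : ℝ) * C / c + 2 := by
    have h1 : K.card = (⌈((n : ℝ) * C) / c⌉ + 1 - (n : ℤ)).toNat := Int.card_Icc _ _
    rw [h1]
    rcases le_or_gt (⌈((n : ℝ) * C) / c⌉ + 1 - (n : ℤ)) 0 with h | h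
    · rw [Int.toNat_of_nonpos h]
      simpa using by positivity
    · have h2 : (((⌈((n : ℝ) * C) / c⌉ + 1 - (n : ℤ)).toNat : ℤ) : ℝ) =
          ((⌈((n : ℝ) * C) / c⌉ : ℝ) + 1 - (n : ℝ)) := by
        rw [Int.toNat_of_nonneg h.le]; push_cast; ring
      have h3 := Int.ceil_lt_add_one (((n : ℝ) * C) / c)
      have h4 : (0:ℝ) ≤ (n : ℝ) := Nat.cast_nonneg n
      calc ((⌈((n : ℝ) * C) / c⌉ + 1 - (n : ℤ)).toNat : ℝ)
          = ((⌈((n : ℝ) * C) / c⌉ : ℝ) + 1 - (n : ℝ)) := by exact_mod_cast h2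
        _ ≤ (n : ℝ) * C / c + 2 := by linarith
  calc ∑ k ∈ K, ∑ x ∈ Finset.filter (fun i => kf i = k) E,
        Real.exp (birkhoff f (fun y => φ y - β * ψ y) n x)
      ≤ ∑ _k ∈ K, B := Finset.sum_le_sum hperk
    _ = (K.card : ℝ) * B := by rw [Finset.sum_const, nsmul_eq_mul]
    _ ≤ ((n : ℝ) * C / c + 2) * B := mul_le_mul_of_nonneg_right hcard hB0
    _ = (2 * Real.exp (|β| * C)) * ((n : ℝ) * C / c + 2) *
        Real.exp ((n : ℝ) * (δ + (β₁ - β) * c)) := by rw [hB]; ring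

end aux4


lemma linear_le_exp_eventually (a b γ : ℝ) (ha : 0 ≤ a) (hb : 0 ≤ b) (hγ : 0 < γ) :
    ∃ x₁ : ℝ, ∀ x : ℝ, x₁ ≤ x → a * x + b ≤ Real.exp (γ * x) := by
  refine ⟨max (4 * (a + b) / γ ^ 2) 1, fun x hx => ?_⟩
  have h1 : (1:ℝ) ≤ x := le_trans (le_max_right _ _) hx
  have h2 : 4 * (a + b) ≤ γ ^ 2 * x := by
    have h := le_trans (le_max_left _ _) hx
    exact (div_le_iff₀ (by positivity)).mp h |>.trans_eq (mul_comm _ _)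
  have h3 : γ * x / 2 + 1 ≤ Real.exp (γ * x / 2) := Real.add_one_le_exp _
  have h4 : Real.exp (γ * x) = Real.exp (γ * x / 2) * Real.exp (γ * x / 2) := by
    rw [← Real.exp_add]; ring_nf
  have h30 : (0:ℝ) ≤ γ * x / 2 + 1 := by nlinarith
  have h5 : (γ * x / 2 + 1) * (γ * x / 2 + 1) ≤
      Real.exp (γ * x / 2) * Real.exp (γ * x / 2) :=
    mul_le_mul h3 h3 h30 (Real.exp_pos _).le
  have h6 : 4 * (a + b) * x ≤ γ ^ 2 * x * x := mul_le_mul_of_nonneg_right h2 (by linarith)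
  have h7 : b * 1 ≤ b * x := mul_le_mul_of_nonneg_left h1 hb
  rw [h4]
  nlinarith [h5, h6, h7, hγ.le, ha, hb]

section aux5
variable {X : Type*} [MetricSpace X]

lemma key_lemma [CompactSpace X] [Nonempty X] (f : X → X) (φ ψ : X → ℝ)
    (hf : Continuous f) (hφ : Continuous φ) (hψ : Continuous ψ) (hpos : ∀ x, 0 < ψ x)
    (β : ℝ) (hβ : inducedPressure f φ ψ < (β : EReal)) :
    topPressure f (fun x => φ x - β * ψ x) ≤ 0 := by
  obtain ⟨x₀, -, hx₀⟩ := isCompact_univ.exists_isMinOn univ_nonempty hψ.continuousOn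
  set c := ψ x₀ with hcdef
  have hc0 : 0 < c := hpos x₀
  have hc : ∀ x, c ≤ ψ x := fun x => hx₀ (mem_univ x)
  obtain ⟨x₁, -, hx₁⟩ := isCompact_univ.exists_isMaxOn univ_nonempty hψ.continuousOn
  set C := ψ x₁ with hCdef
  have hC : ∀ x, ψ x ≤ C := fun x => hx₁ (mem_univ x)
  obtain ⟨β₁, hβ₁, hβ₁'⟩ := EReal.lt_iff_exists_real_btwn.mp hβ
  have hβ₁β : β₁ < β := by exact_mod_cast hβ₁'
  set g := fun x => φ x - β * ψ x with hg
  have hgc : Continuous g := hφ.sub (continuous_const.mul hψ)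
  unfold topPressure
  apply iSup₂_le
  intro ε hε
  set L := Filter.limsup
    (fun n : ℕ => (((n : ℝ)⁻¹ * Real.log (sepSum f g n ε) : ℝ) : EReal)) atTop with hL
  have main : ∀ δ' : ℝ, 0 < δ' → L ≤ (δ' : EReal) := by
    intro δ' hδ'
    set δ := δ' / 2 with hδdef
    have hδ : 0 < δ := by positivity
    obtain ⟨ε0, hε0, hmod⟩ := Metric.uniformContinuous_iff.mp
      (CompactSpace.uniformContinuous_of_continuous hφ) δ hδ
    have hmod' : ∀ a b : X, dist a b < ε0 → |φ a - φ b| < δ := by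
      intro a b h
      have := hmod h
      rwa [Real.dist_eq] at this
    set ε₂ := min ε ε0 with hε₂def
    have hε₂ : 0 < ε₂ := lt_min hε hε0
    have hε₂ε : ε₂ ≤ ε := min_le_left _ _
    have hε₂ε0 : ε₂ / 2 < ε0 := by
      have := min_le_right ε ε0
      have : ε₂ ≤ ε0 := this
      linarith
    have hle : Filter.limsup
        (fun T : ℝ => ((T⁻¹ * Real.log (Qspan f φ ψ T (ε₂ / 2)) : ℝ) : EReal)) atTop ≤
        inducedPressure f φ ψ := by
      unfold inducedPressure
      exact le_iSup₂ (f := fun (e : ℝ) (_ : 0 < e) => Filter.limsup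
        (fun T : ℝ => ((T⁻¹ * Real.log (Qspan f φ ψ T e) : ℝ) : EReal)) atTop)
        (ε₂ / 2) (by positivity)
    have hlt := lt_of_le_of_lt hle hβ₁
    have hev := Filter.eventually_lt_of_limsup_lt hlt
    obtain ⟨T₀', hT₀'⟩ := Filter.eventually_atTop.mp (hev.and (Filter.eventually_ge_atTop 1))
    set T₀ := max T₀' 1 with hT₀def
    have hQ : ∀ T : ℝ, T₀ ≤ T → Qspan f φ ψ T (ε₂ / 2) ≤ Real.exp (β₁ * T) := by
      intro T hT
      have h1 := hT₀' T (le_trans (le_max_left _ _) hT)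
      have hT1 : (1:ℝ) ≤ T := le_trans (le_max_right _ _) hT
      have hTpos : (0:ℝ) < T := by linarith
      have h2 : T⁻¹ * Real.log (Qspan f φ ψ T (ε₂ / 2)) < β₁ := by exact_mod_cast h1.1
      have hlog : Real.log (Qspan f φ ψ T (ε₂ / 2)) < β₁ * T := by
        have h3 := (mul_lt_mul_iff_right₀ hTpos).mpr h2
        rwa [← mul_assoc, mul_inv_cancel₀ (ne_of_gt hTpos), one_mul, mul_comm] at h3
      rcases eq_or_lt_of_le (Qspan_nonneg f φ ψ T (ε₂ / 2)) with hQ0 | hQ0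
      · rw [← hQ0]
        exact (Real.exp_pos _).le
      · calc Qspan f φ ψ T (ε₂ / 2)
            = Real.exp (Real.log (Qspan f φ ψ T (ε₂ / 2))) := (Real.exp_log hQ0).symm
          _ ≤ Real.exp (β₁ * T) := Real.exp_le_exp.mpr hlog.le
    have hC0 : 0 < C := hc0.trans_le (hc x₁)
    obtain ⟨x₂, hx₂⟩ := linear_le_exp_eventually (2 * Real.exp (|β| * C) * (C / c))
      (2 * Real.exp (|β| * C) * 2) δ
      (mul_nonneg (by positivity) (div_nonneg hC0.le hc0.le)) (by positivity) hδ
    have hev2 : ∀ᶠ n : ℕ in atTop,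
        (fun n : ℕ => (((n : ℝ)⁻¹ * Real.log (sepSum f g n ε) : ℝ) : EReal)) n ≤ (δ' : EReal) := by
      have h1 : ∀ᶠ n : ℕ in atTop, (1:ℕ) ≤ n := Filter.eventually_ge_atTop 1
      have h2 : ∀ᶠ n : ℕ in atTop, T₀ / c ≤ (n : ℝ) :=
        tendsto_natCast_atTop_atTop.eventually_ge_atTop (T₀ / c)
      have h3 : ∀ᶠ n : ℕ in atTop, x₂ ≤ (n : ℝ) :=
        tendsto_natCast_atTop_atTop.eventually_ge_atTop x₂
      filter_upwards [h1, h2, h3] with n hn1 hn2 hn3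
      have hn0 : 0 < n := hn1
      have hn0' : (0:ℝ) < (n : ℝ) := by exact_mod_cast hn0
      have hT₀n : T₀ ≤ (n : ℝ) * c := (div_le_iff₀ hc0).mp hn2
      have hbound := sep_bound f φ ψ hf hc0 hc hC β β₁ δ ε₂ ε0 T₀ hβ₁β hδ hε₂ hmod' hε₂ε0 hQ n hT₀n
      have hmono := sepSum_mono f g hf hgc n hε₂ hε₂ε
      have hfinal : sepSum f g n ε ≤ Real.exp ((n : ℝ) * δ') := by
        have hA : 2 * Real.exp (|β| * C) * ((n : ℝ) * C / c + 2) ≤ Real.exp ((n : ℝ) * δ) := by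
          have h := hx₂ (n : ℝ) hn3
          calc 2 * Real.exp (|β| * C) * ((n : ℝ) * C / c + 2)
              = (2 * Real.exp (|β| * C) * (C / c)) * (n : ℝ) +
                2 * Real.exp (|β| * C) * 2 := by ring
            _ ≤ Real.exp (δ * (n : ℝ)) := h
            _ = Real.exp ((n : ℝ) * δ) := by rw [mul_comm]
        have hB2 : Real.exp ((n : ℝ) * (δ + (β₁ - β) * c)) ≤ Real.exp ((n : ℝ) * δ) := by
          apply Real.exp_le_exp.mpr
          have hneg : (β₁ - β) * c ≤ 0 :=
            mul_nonpos_of_nonpos_of_nonneg (by linarith) hc0.le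
          nlinarith [hn0'.le]
        calc sepSum f g n ε ≤ sepSum f g n ε₂ := hmono
          _ ≤ 2 * Real.exp (|β| * C) * ((n : ℝ) * C / c + 2) *
              Real.exp ((n : ℝ) * (δ + (β₁ - β) * c)) := hbound
          _ ≤ Real.exp ((n : ℝ) * δ) * Real.exp ((n : ℝ) * δ) :=
              mul_le_mul hA hB2 (Real.exp_pos _).le (Real.exp_pos _).le
          _ = Real.exp ((n : ℝ) * δ') := by
              rw [← Real.exp_add]
              congr 1
              rw [hδdef]
              ring
      have hsep0 : 0 ≤ sepSum f g n ε := sepSum_nonneg f g hf hgc n hε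
      have hreal : (n : ℝ)⁻¹ * Real.log (sepSum f g n ε) ≤ δ' := by
        rcases eq_or_lt_of_le hsep0 with h0 | h0
        · rw [← h0, Real.log_zero, mul_zero]
          exact hδ'.le
        · have hlog2 : Real.log (sepSum f g n ε) ≤ (n : ℝ) * δ' := by
            calc Real.log (sepSum f g n ε) ≤ Real.log (Real.exp ((n : ℝ) * δ')) :=
                  Real.log_le_log h0 hfinal
              _ = (n : ℝ) * δ' := Real.log_exp _
          calc (n : ℝ)⁻¹ * Real.log (sepSum f g n ε)
              ≤ (n : ℝ)⁻¹ * ((n : ℝ) * δ') :=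
                mul_le_mul_of_nonneg_left hlog2 (by positivity)
            _ = δ' := by field_simp
      exact_mod_cast EReal.coe_le_coe_iff.mpr hreal
    exact Filter.limsup_le_of_le (by isBoundedDefault) hev2
  by_contra hcon
  push_neg at hcon
  obtain ⟨z, hz0, hzL⟩ := EReal.lt_iff_exists_real_btwn.mp hcon
  have hz0' : (0:ℝ) < z := by exact_mod_cast hz0
  exact absurd (main z hz0') (not_le.mpr hzL)

end aux5


/-- `P_ψ(φ) ≥ inf{β : P(φ - βψ) ≤ 0}`. -/
theorem stmt7 [MetricSpace X] [CompactSpace X] [Nonempty X]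
    (f : X → X) (φ ψ : X → ℝ) (hf : Continuous f) (hφ : Continuous φ) (hψ : Continuous ψ)
    (hpos : ∀ x, 0 < ψ x) :
    sInf { b : EReal | ∃ β : ℝ, b = (β : EReal) ∧
        topPressure f (fun x => φ x - β * ψ x) ≤ 0 } ≤ inducedPressure f φ ψ := by
  by_contra hcon
  push_neg at hcon
  obtain ⟨z, h1, h2⟩ := EReal.lt_iff_exists_real_btwn.mp hcon
  have hz : topPressure f (fun y => φ y - z * ψ y) ≤ 0 := key_lemma f φ ψ hf hφ hψ hpos z h1
  have hmem : (z : EReal) ∈ { b : EReal | ∃ β : ℝ, b = (β : EReal) ∧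
      topPressure f (fun x => φ x - β * ψ x) ≤ 0 } := ⟨z, rfl, hz⟩
  exact absurd (sInf_le hmem) (not_le.mpr h2)
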